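/- Let p be a prime number and let n be a positive integer. Then S_n(n) ≡ p (mod n) if and only if the following conditions all hold: (i) the prime power factorization of n has the form n = p^s · q_1 ⋯ q_r where 0 ≤ s ≤ 2 and q_1, …, q_r are distinct primes different from p, each appearing to the first power; (ii) for every i ∈ {1,…,r}, q_i − 1 divides n and n/q_i + p ≡ 0 (mod q_i); (iii) if s = 1, then p − 1 does not divide n; (iv) if s = 2, then p − 1 divides n and n/p² + 1 ≡ 0 (mod p). -/

import Mathlib

lemma cast_fin_bij (d : ℕ) [NeZero d] :
    Function.Bijective (fun i : Fin d => ((i : ℕ) : ZMod d)) := by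
  rw [Fintype.bijective_iff_injective_and_card]
  refine ⟨fun i j hij => ?_, by simp [ZMod.card]⟩
  have h1 : (((i:ℕ) : ZMod d)).val = i := ZMod.val_cast_of_lt i.isLt
  have h2 : (((j:ℕ) : ZMod d)).val = j := ZMod.val_cast_of_lt j.isLt
  ext
  rw [← h1, ← h2]
  exact congrArg ZMod.val hij

lemma sum_Icc_cast {M : Type*} [AddCommMonoid M] (d : ℕ) [NeZero d] (f : ZMod d → M) :
    ∑ i ∈ Finset.Icc 1 d, f (i : ZMod d) = ∑ x : ZMod d, f x := by
  rw [← Finset.Ico_add_one_right_eq_Icc, Finset.sum_Ico_eq_sum_range]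
  have h : d + 1 - 1 = d := rfl
  rw [h, ← Fin.sum_univ_eq_sum_range]
  have hbij : Function.Bijective (fun i : Fin d => ((1 + (i : ℕ) : ℕ) : ZMod d)) := by
    have he : (fun i : Fin d => ((1 + (i : ℕ) : ℕ) : ZMod d))
        = (fun x : ZMod d => 1 + x) ∘ (fun i : Fin d => ((i : ℕ) : ZMod d)) := by
      funext i; push_cast; rfl
    rw [he]
    exact (Equiv.addLeft (1 : ZMod d)).bijective.comp (cast_fin_bij d)
  exact Fintype.sum_bijective _ hbij (fun i : Fin d => f ((1 + (i:ℕ) : ℕ) : ZMod d)) f (fun i => rfl)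


/-- `S k n = ∑_{i=1}^{n} i^k`. -/
def S (k n : ℕ) : ℕ := ∑ i ∈ Finset.Icc 1 n, i ^ k

lemma S_cast (k d : ℕ) [NeZero d] : ((S k d : ℕ) : ZMod d) = ∑ x : ZMod d, x ^ k := by
  rw [S, Nat.cast_sum]
  have := sum_Icc_cast d (fun x : ZMod d => x ^ k)
  simp only [Nat.cast_pow] at *
  exact this

lemma S_cast_mul (k d m : ℕ) [NeZero d] :
    ((S k (d * m) : ℕ) : ZMod d) = (m : ZMod d) * ∑ x : ZMod d, x ^ k := by
  induction m with
  | zero => simp [S]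
  | succ m ih =>
    have hsplit : S k (d * m) + ∑ i ∈ Finset.Ioc (d * m) (d * m + d), i ^ k = S k (d * (m+1)) := by
      have hIoc : ∀ N : ℕ, Finset.Icc 1 N = Finset.Ioc 0 N := by
        intro N; ext x; simp [Nat.lt_iff_add_one_le]
      rw [S, hIoc, S, hIoc, mul_add, mul_one]
      exact Finset.sum_Ioc_consecutive _ (Nat.zero_le _) (Nat.le_add_right _ _)
    rw [← hsplit, Nat.cast_add, ih, Nat.cast_sum]
    have hmap : Finset.Ioc (d * m) (d * m + d)
        = (Finset.Ioc 0 d).map (addLeftEmbedding (d * m)) := by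
      rw [Finset.map_add_left_Ioc, add_zero]
    rw [hmap, Finset.sum_map]
    have h2 : ∀ j ∈ Finset.Ioc 0 d, (((addLeftEmbedding (d*m)) j ^ k : ℕ) : ZMod d)
        = ((j : ZMod d)) ^ k := by
      intro j hj
      simp only [addLeftEmbedding_apply]
      push_cast
      rw [ZMod.natCast_self]
      ring_nf
    rw [Finset.sum_congr rfl h2]
    have h3 : ∑ j ∈ Finset.Ioc 0 d, ((j : ZMod d)) ^ k = ∑ x : ZMod d, x ^ k := by
      have hIoc : Finset.Icc 1 d = Finset.Ioc 0 d := by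
        ext x; simp [Nat.lt_iff_add_one_le]
      rw [← hIoc]
      exact sum_Icc_cast d (fun x : ZMod d => x ^ k)
    rw [h3]
    push_cast
    ring

open Finset in
lemma sum_pow_eq_units_sum (q e k : ℕ) (hq : q.Prime) (he : 1 ≤ e) (hek : e ≤ k) :
    haveI : NeZero (q^e) := ⟨pow_ne_zero e hq.pos.ne'⟩
    ∑ x : ZMod (q^e), x^k = ∑ u : (ZMod (q^e))ˣ, ((u : ZMod (q^e)))^k := by
  haveI : NeZero (q^e) := ⟨pow_ne_zero e hq.pos.ne'⟩
  classical
  rw [← Finset.sum_filter_add_sum_filter_not Finset.univ IsUnit (fun x : ZMod (q^e) => x^k)]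
  have h0 : ∑ x ∈ univ.filter (fun x : ZMod (q^e) => ¬ IsUnit x), x^k = 0 := by
    apply Finset.sum_eq_zero
    intro x hx
    rw [Finset.mem_filter] at hx
    have hx' := hx.2
    have hxval : ((x.val : ℕ) : ZMod (q^e)) = x := ZMod.natCast_rightInverse x
    have hncop : ¬ Nat.Coprime x.val (q^e) := by
      intro h
      exact hx' (hxval ▸ (ZMod.unitOfCoprime x.val h).isUnit)
    have hdvd : q ∣ x.val := by
      by_contra hnd
      exact hncop (((Nat.Prime.coprime_iff_not_dvd hq).mpr hnd).symm.pow_right e)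
    obtain ⟨c, hc⟩ := hdvd
    have : x ^ k = (((q * c)^k : ℕ) : ZMod (q^e)) := by
      rw [← hc, Nat.cast_pow, hxval]
    rw [this, ZMod.natCast_eq_zero_iff]
    calc q^e ∣ q^k := pow_dvd_pow q hek
    _ ∣ (q*c)^k := pow_dvd_pow_of_dvd (dvd_mul_right q c) k
  rw [h0, add_zero]
  have himg : univ.filter (fun x : ZMod (q^e) => IsUnit x)
      = univ.image (fun u : (ZMod (q^e))ˣ => (u : ZMod (q^e))) := by
    ext x
    simp only [mem_filter, mem_univ, true_and, mem_image]
    constructor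
    · rintro ⟨u, rfl⟩; exact ⟨u, rfl⟩
    · rintro ⟨u, _, rfl⟩; exact u.isUnit
  rw [himg, Finset.sum_image (fun a _ b _ h => Units.ext h)]

lemma units_sum_pow (q e k : ℕ) (hq : q.Prime) (he : 1 ≤ e) (hk : q^e ∣ k) :
    haveI : NeZero (q^e) := ⟨pow_ne_zero e hq.pos.ne'⟩
    ∑ u : (ZMod (q^e))ˣ, ((u : ZMod (q^e)))^k
      = if (q - 1) ∣ k then -((q^(e-1) : ℕ) : ZMod (q^e)) else 0 := by
  haveI : NeZero (q^e) := ⟨pow_ne_zero e hq.pos.ne'⟩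
  haveI : Fact q.Prime := ⟨hq⟩
  by_cases h : (q - 1) ∣ k
  · rw [if_pos h]
    have hcop : Nat.Coprime (q^(e-1)) (q-1) :=
      Nat.Coprime.pow_left _ ((Nat.coprime_self_sub_right hq.one_le).mpr (Nat.coprime_one_right q))
    have hφ : q^(e-1) * (q-1) ∣ k :=
      hcop.mul_dvd_of_dvd_of_dvd (dvd_trans (pow_dvd_pow q (Nat.sub_le e 1)) hk) h
    have hcard : Fintype.card (ZMod (q^e))ˣ = q^(e-1) * (q-1) := by
      rw [ZMod.card_units_eq_totient, Nat.totient_prime_pow hq he]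
    have hone : ∀ u : (ZMod (q^e))ˣ, ((u : ZMod (q^e)))^k = 1 := by
      intro u
      have : u ^ k = 1 := by
        apply orderOf_dvd_iff_pow_eq_one.mp
        calc orderOf u ∣ Fintype.card (ZMod (q^e))ˣ := orderOf_dvd_card
        _ ∣ k := hcard ▸ hφ
      calc ((u : ZMod (q^e)))^k = ((u^k : (ZMod (q^e))ˣ) : ZMod (q^e)) := by push_cast; ring
      _ = 1 := by rw [this]; rfl
    rw [Finset.sum_congr rfl (fun u _ => hone u), Finset.sum_const, Finset.card_univ, hcard]
    have hle : q^(e-1) ≤ q^e := pow_le_pow_right₀ hq.one_le (Nat.sub_le e 1)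
    have heq : (q^(e-1) * (q - 1) : ℕ) = q^e - q^(e-1) := by
      rw [Nat.mul_sub_one, ← pow_succ, Nat.sub_add_cancel he]
    rw [nsmul_eq_mul, mul_one, heq, Nat.cast_sub hle, ZMod.natCast_self, zero_sub]
  · rw [if_neg h]
    -- find a unit x of ZMod q with x ^ k ≠ 1
    have hcard : Fintype.card (ZMod q) = q := ZMod.card q
    have hex : ∃ x : (ZMod q)ˣ, x ^ k ≠ 1 := by
      by_contra hall
      push_neg at hall
      exact h (hcard ▸ (FiniteField.forall_pow_eq_one_iff (K := ZMod q) k).mp hall)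
    obtain ⟨x, hx⟩ := hex
    set a : ℕ := ((x : ZMod q)).val with ha
    have hacop : Nat.Coprime a q := ZMod.val_coe_unit_coprime x
    have hacop' : Nat.Coprime a (q ^ e) := hacop.pow_right e
    set u0 : (ZMod (q^e))ˣ := ZMod.unitOfCoprime a hacop' with hu0
    set y : ZMod (q^e) := ((u0 : ZMod (q^e)))^k - 1 with hy
    have hqdvd : q ∣ q ^ e := dvd_pow_self q (Nat.one_le_iff_ne_zero.mp he)
    have hfy : ((y.val : ℕ) : ZMod q) = (x : ZMod q)^k - 1 := by
      have h1 : ((y.val : ℕ) : ZMod q) = ZMod.castHom hqdvd (ZMod q) y := by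
        rw [ZMod.castHom_apply, ZMod.natCast_val]
      rw [h1, hy]
      rw [map_sub, map_pow, map_one]
      congr 1
      have : (u0 : ZMod (q^e)) = ((a : ℕ) : ZMod (q^e)) := ZMod.coe_unitOfCoprime a hacop'
      rw [this, map_natCast, ha, ZMod.natCast_val, ZMod.cast_id]
    have hfy0 : ((y.val : ℕ) : ZMod q) ≠ 0 := by
      rw [hfy]
      intro hc
      apply hx
      ext
      push_cast
      rw [sub_eq_zero] at hc
      simpa using hc
    have hyunit : IsUnit y := by
      have hnd : ¬ q ∣ y.val := fun hd => hfy0 ((ZMod.natCast_eq_zero_iff _ _).mpr hd)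
      have hcop : Nat.Coprime y.val (q ^ e) :=
        (((Nat.Prime.coprime_iff_not_dvd hq).mpr hnd).symm).pow_right e
      have := (ZMod.unitOfCoprime y.val hcop).isUnit
      rwa [ZMod.coe_unitOfCoprime, ZMod.natCast_rightInverse y] at this
    -- standard averaging trick
    set Sig : ZMod (q^e) := ∑ u : (ZMod (q^e))ˣ, ((u : ZMod (q^e)))^k with hSig
    have hre : ∑ u : (ZMod (q^e))ˣ, (((u0 * u : (ZMod (q^e))ˣ) : ZMod (q^e)))^k = Sig :=
      Fintype.sum_equiv (Equiv.mulLeft u0)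
        (fun u => (((u0 * u : (ZMod (q^e))ˣ) : ZMod (q^e)))^k)
        (fun u => ((u : ZMod (q^e)))^k) (fun u => rfl)
    have hre2 : ∑ u : (ZMod (q^e))ˣ, (((u0 * u : (ZMod (q^e))ˣ) : ZMod (q^e)))^k
        = ((u0 : ZMod (q^e)))^k * Sig := by
      rw [hSig, Finset.mul_sum]
      apply Finset.sum_congr rfl
      intro u _
      push_cast
      rw [mul_pow]
    have hzero : y * Sig = 0 := by
      rw [hy, sub_mul, one_mul, ← hre2, hre, sub_self]
    exact (IsUnit.mul_right_eq_zero hyunit).mp hzero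

lemma S_key (q e k m : ℕ) (hq : q.Prime) (he : 1 ≤ e) (hk : q^e ∣ k) (hk0 : k ≠ 0) :
    haveI : NeZero (q^e) := ⟨pow_ne_zero e hq.pos.ne'⟩
    ((S k (q^e * m) : ℕ) : ZMod (q^e))
      = (m : ZMod (q^e)) * (if (q - 1) ∣ k then -((q^(e-1) : ℕ) : ZMod (q^e)) else 0) := by
  haveI : NeZero (q^e) := ⟨pow_ne_zero e hq.pos.ne'⟩
  have hek : e ≤ k := le_trans (le_of_lt (Nat.lt_pow_self hq.one_lt : e < q ^ e))
    (Nat.le_of_dvd (Nat.pos_of_ne_zero hk0) hk)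
  rw [S_cast_mul, sum_pow_eq_units_sum q e k hq he hek, units_sum_pow q e k hq he hk]

lemma S_mod (q e n : ℕ) (hq : q.Prime) (he : 1 ≤ e) (hd : q^e ∣ n) (hn : n ≠ 0) :
    haveI : NeZero (q^e) := ⟨pow_ne_zero e hq.pos.ne'⟩
    ((S n n : ℕ) : ZMod (q^e))
      = ((n / q^e : ℕ) : ZMod (q^e)) * (if (q - 1) ∣ n then -((q^(e-1) : ℕ) : ZMod (q^e)) else 0) := by
  have hkey := S_key q e n (n / q^e) hq he hd hn
  rwa [Nat.mul_div_cancel' hd] at hkey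

lemma modEq_prod (a b : ℕ) (Q : Finset ℕ) (hQ : ∀ q ∈ Q, Nat.Prime q)
    (h : ∀ q ∈ Q, a ≡ b [MOD q]) : a ≡ b [MOD ∏ q ∈ Q, q] := by
  classical
  induction Q using Finset.induction_on with
  | empty => simpa using Nat.modEq_one
  | @insert r s hq ih =>
    rw [Finset.prod_insert hq]
    have hcop : Nat.Coprime r (∏ i ∈ s, i) := by
      apply Nat.Coprime.prod_right
      intro i hi
      refine (Nat.coprime_primes (hQ r (Finset.mem_insert_self r s))
        (hQ i (Finset.mem_insert_of_mem hi))).mpr ?_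
      rintro rfl
      exact hq hi
    exact (Nat.modEq_and_modEq_iff_modEq_mul hcop).mp
      ⟨h r (Finset.mem_insert_self r s),
       ih (fun i hi => hQ i (Finset.mem_insert_of_mem hi))
          (fun i hi => h i (Finset.mem_insert_of_mem hi))⟩

/-- Characterization of solutions of `S_n(n) ≡ p (mod n)` for a prime `p`. -/
theorem stmt_0 (p : ℕ) (hp : p.Prime) (n : ℕ) (hn : 0 < n) :
    S n n ≡ p [MOD n] ↔
      ∃ (s : ℕ) (Q : Finset ℕ),
        s ≤ 2 ∧
        (∀ q ∈ Q, Nat.Prime q ∧ q ≠ p) ∧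
        n = p ^ s * ∏ q ∈ Q, q ∧
        (∀ q ∈ Q, (q - 1) ∣ n ∧ q ∣ (n / q + p)) ∧
        (s = 1 → ¬ (p - 1) ∣ n) ∧
        (s = 2 → (p - 1) ∣ n ∧ p ∣ (n / p ^ 2 + 1)) := by
  have hn0 : n ≠ 0 := hn.ne'
  constructor
  · intro H
    -- the cast identity modulo every prime power dividing n
    have hcast : ∀ q e : ℕ, q.Prime → 1 ≤ e → q^e ∣ n →
        ((p : ℕ) : ZMod (q^e)) = ((n / q^e : ℕ) : ZMod (q^e)) *
          (if (q - 1) ∣ n then -((q^(e-1) : ℕ) : ZMod (q^e)) else 0) := by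
      intro q e hq he hd
      haveI : NeZero (q^e) := ⟨pow_ne_zero e hq.pos.ne'⟩
      have h1 : ((S n n : ℕ) : ZMod (q^e)) = ((p : ℕ) : ZMod (q^e)) :=
        (ZMod.natCast_eq_natCast_iff _ _ _).mpr (H.of_dvd hd)
      rw [← h1, S_mod q e n hq he hd hn0]
    -- no prime q ≠ p has square dividing n
    have noq2 : ∀ q : ℕ, q.Prime → q ≠ p → ¬ q^2 ∣ n := by
      intro q hq hne hd
      haveI : NeZero (q^2) := ⟨pow_ne_zero 2 hq.pos.ne'⟩
      have h2 := hcast q 2 hq (by norm_num) hd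
      have hqd : q ∣ q^2 := dvd_pow_self q two_ne_zero
      have h3 := congrArg (ZMod.castHom hqd (ZMod q)) h2
      rw [map_natCast, map_mul, map_natCast, apply_ite (ZMod.castHom hqd (ZMod q))] at h3
      rw [map_neg, map_natCast, map_zero] at h3
      norm_num [ZMod.natCast_self] at h3
      have : q ∣ p := (ZMod.natCast_eq_zero_iff _ _).mp h3
      exact hne ((Nat.prime_dvd_prime_iff_eq hq hp).mp this)
    have nop3 : ¬ p^3 ∣ n := by
      intro hd
      haveI : NeZero (p^3) := ⟨pow_ne_zero 3 hp.pos.ne'⟩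
      haveI : NeZero (p^2) := ⟨pow_ne_zero 2 hp.pos.ne'⟩
      have h2 := hcast p 3 hp (by norm_num) hd
      have hqd : p^2 ∣ p^3 := pow_dvd_pow p (by norm_num)
      have h3 := congrArg (ZMod.castHom hqd (ZMod (p^2))) h2
      rw [map_natCast, map_mul, map_natCast, apply_ite (ZMod.castHom hqd (ZMod (p^2))),
        map_neg, map_natCast, map_zero] at h3
      norm_num [ZMod.natCast_self] at h3
      have hdvd : p^2 ∣ p := (ZMod.natCast_eq_zero_iff _ _).mp h3
      have := Nat.le_of_dvd hp.pos hdvd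
      nlinarith [hp.two_le]
    have qcond : ∀ q : ℕ, q.Prime → q ≠ p → q ∣ n → (q - 1) ∣ n ∧ q ∣ (n / q + p) := by
      intro q hq hne hd
      haveI : NeZero q := ⟨hq.pos.ne'⟩
      have h1 := hcast q 1 hq le_rfl (by rwa [pow_one])
      rw [pow_one] at h1
      norm_num at h1
      have hp0 : ((p : ℕ) : ZMod q) ≠ 0 := by
        rw [Ne, ZMod.natCast_eq_zero_iff]
        intro hdp
        exact hne ((Nat.prime_dvd_prime_iff_eq hq hp).mp hdp)
      by_cases hc : (q - 1) ∣ n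
      · refine ⟨hc, ?_⟩
        rw [if_pos hc] at h1
        rw [← ZMod.natCast_eq_zero_iff]
        push_cast
        rw [h1]
        ring
      · simp only [if_neg hc, mul_zero] at h1
        exact absurd h1 hp0
    have pcase1 : p ∣ n → ¬ p^2 ∣ n → ¬ (p - 1) ∣ n := by
      intro hd hnd hc
      haveI : NeZero p := ⟨hp.pos.ne'⟩
      have h1 := hcast p 1 hp le_rfl (by rwa [pow_one])
      rw [pow_one] at h1
      norm_num [if_pos hc, ZMod.natCast_self] at h1
      have hpdvd : p ∣ n / p := by
        rw [← ZMod.natCast_eq_zero_iff]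
        exact h1
      exact hnd (by rw [pow_two]; exact (Nat.dvd_div_iff_mul_dvd hd).mp hpdvd)
    have pcase2 : p^2 ∣ n → (p - 1) ∣ n ∧ p ∣ (n / p^2 + 1) := by
      intro hd
      haveI : NeZero (p^2) := ⟨pow_ne_zero 2 hp.pos.ne'⟩
      have h2 := hcast p 2 hp (by norm_num) hd
      norm_num at h2
      have hpnot : ((p : ℕ) : ZMod (p^2)) ≠ 0 := by
        rw [Ne, ZMod.natCast_eq_zero_iff]
        intro hdvd
        have := Nat.le_of_dvd hp.pos hdvd
        nlinarith [hp.two_le]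
      by_cases hc : (p - 1) ∣ n
      · refine ⟨hc, ?_⟩
        rw [if_pos hc] at h2
        have hz : (((p * (n / p^2 + 1)) : ℕ) : ZMod (p^2)) = 0 := by
          push_cast
          linear_combination h2
        rw [ZMod.natCast_eq_zero_iff] at hz
        have hz2 : p * p ∣ p * (n / p^2 + 1) := by rw [← pow_two]; exact hz
        exact (mul_dvd_mul_iff_left hp.pos.ne').mp hz2
      · simp only [if_neg hc, mul_zero] at h2
        exact absurd h2 hpnot
    have hQprime : ∀ q ∈ n.primeFactors.erase p, q.Prime ∧ q ≠ p := fun q hq =>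
      ⟨Nat.prime_of_mem_primeFactors (Finset.mem_of_mem_erase hq), (Finset.mem_erase.mp hq).1⟩
    have hfactq : ∀ q ∈ n.primeFactors.erase p, n.factorization q = 1 := by
      intro q hq
      obtain ⟨hqprime, hqne⟩ := hQprime q hq
      have h1le : 1 ≤ n.factorization q := by
        rw [← Nat.Prime.pow_dvd_iff_le_factorization hqprime hn0, pow_one]
        exact Nat.dvd_of_mem_primeFactors (Finset.mem_of_mem_erase hq)
      have h2le : n.factorization q ≤ 1 := by
        by_contra hgt
        push_neg at hgt
        exact noq2 q hqprime hqne
          ((Nat.Prime.pow_dvd_iff_le_factorization hqprime hn0).mpr hgt)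
      omega
    refine ⟨n.factorization p, n.primeFactors.erase p, ?_, hQprime, ?_, ?_, ?_, ?_⟩
    · by_contra hgt
      push_neg at hgt
      exact nop3 ((Nat.Prime.pow_dvd_iff_le_factorization hp hn0).mpr hgt)
    · have hbase : n = ∏ q ∈ n.primeFactors, q ^ n.factorization q := by
        conv_lhs => rw [← Nat.factorization_prod_pow_eq_self hn0]
        rw [Nat.prod_factorization_eq_prod_primeFactors]
      by_cases hpn : p ∈ n.primeFactors
      · conv_lhs => rw [hbase]
        rw [← Finset.mul_prod_erase _ _ hpn]
        congr 1
        refine Finset.prod_congr rfl (fun q hq => ?_)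
        rw [hfactq q hq, pow_one]
      · have hs0 : n.factorization p = 0 := by
          rw [← Finsupp.notMem_support_iff, Nat.support_factorization]
          exact hpn
        rw [hs0, pow_zero, one_mul, Finset.erase_eq_of_notMem hpn]
        conv_lhs => rw [hbase]
        refine Finset.prod_congr rfl (fun q hq => ?_)
        have : n.factorization q = 1 := by
          apply hfactq
          rwa [Finset.erase_eq_of_notMem hpn]
        rw [this, pow_one]
    · intro q hq
      obtain ⟨hqprime, hqne⟩ := hQprime q hq
      exact qcond q hqprime hqne (Nat.dvd_of_mem_primeFactors (Finset.mem_of_mem_erase hq))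
    · intro hs1
      apply pcase1
      · have := Nat.ordProj_dvd n p
        rwa [hs1, pow_one] at this
      · intro hd
        have := (Nat.Prime.pow_dvd_iff_le_factorization hp hn0).mp hd
        omega
    · intro hs2
      apply pcase2
      have := Nat.ordProj_dvd n p
      rwa [hs2] at this
  · rintro ⟨s, Q, hs2, hQprime, hprod, hconds, h1, h2⟩
    have hq_modeq : ∀ q ∈ Q, S n n ≡ p [MOD q] := by
      intro q hq
      obtain ⟨hqp, hqne⟩ := hQprime q hq
      haveI : NeZero q := ⟨hqp.pos.ne'⟩
      have hqdvd : q ∣ n := by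
        rw [hprod]
        exact Dvd.dvd.mul_left (Finset.dvd_prod_of_mem _ hq) _
      have hkey := S_mod q 1 n hqp le_rfl (by rwa [pow_one]) hn0
      rw [pow_one] at hkey
      obtain ⟨hc1, hc2⟩ := hconds q hq
      rw [if_pos hc1] at hkey
      norm_num at hkey
      rw [← ZMod.natCast_eq_natCast_iff, hkey]
      have hz : (((n / q + p) : ℕ) : ZMod q) = 0 :=
        (ZMod.natCast_eq_zero_iff _ _).mpr hc2
      push_cast at hz
      linear_combination -hz
    have hp_modeq : S n n ≡ p [MOD p ^ s] := by
      interval_cases s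
      · simpa using Nat.modEq_one
      · haveI : NeZero p := ⟨hp.pos.ne'⟩
        have hpdvd : p ∣ n := by
          rw [hprod, pow_one]
          exact dvd_mul_right p _
        have hkey := S_mod p 1 n hp le_rfl (by rwa [pow_one]) hn0
        rw [pow_one, if_neg (h1 rfl), mul_zero] at hkey
        rw [pow_one, ← ZMod.natCast_eq_natCast_iff, hkey, ZMod.natCast_self]
      · obtain ⟨hc1, hc2⟩ := h2 rfl
        haveI : NeZero (p^2) := ⟨pow_ne_zero 2 hp.pos.ne'⟩
        have hpdvd : p^2 ∣ n := by
          rw [hprod]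
          exact dvd_mul_right _ _
        have hkey := S_mod p 2 n hp (by norm_num) hpdvd hn0
        rw [if_pos hc1] at hkey
        norm_num at hkey
        rw [← ZMod.natCast_eq_natCast_iff, hkey]
        have hz : ((p * (n / p^2 + 1) : ℕ) : ZMod (p^2)) = 0 := by
          rw [ZMod.natCast_eq_zero_iff]
          have hmm := mul_dvd_mul_left p hc2
          rwa [← pow_two] at hmm
        push_cast at hz
        linear_combination -hz
    have hQ_modeq : S n n ≡ p [MOD ∏ q ∈ Q, q] :=
      modEq_prod _ _ Q (fun q hq => (hQprime q hq).1) hq_modeq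
    have hcop : Nat.Coprime (p^s) (∏ q ∈ Q, q) := by
      apply Nat.Coprime.pow_left
      apply Nat.Coprime.prod_right
      intro q hq
      exact (Nat.coprime_primes hp (hQprime q hq).1).mpr
        (fun h => (hQprime q hq).2 h.symm)
    have hfin := (Nat.modEq_and_modEq_iff_modEq_mul hcop).mp ⟨hp_modeq, hQ_modeq⟩
    rwa [← hprod] at hfin
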